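/- Let k be a field of characteristic zero and let R = k[x, y, z, w]. Consider the ideal I = (x² − xy, −xy + y², z² − zw, −zw + w²). Then the integral closure of I is \bar{I} = (x² − xy, −xy + y², z² − zw, −zw + w², xz − yz − xw + yw); moreover \bar{I} equals the intersection (x − y, z − w) ∩ (x − y, z², zw, w²) ∩ (z − w, x², xy, y²) of the three height-two primary components of I. -/

import Mathlib

universe u

/-- An element `x` of `R` is integral over an ideal `I` if it satisfies an equation
`x ^ n + a 1 * x ^ (n - 1) + ⋯ + a n = 0` with `a i ∈ I ^ i`. -/
def Ideal.IsIntegralElement {R : Type*} [CommRing R] (I : Ideal R) (x : R) : Prop :=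
  ∃ n : ℕ, 0 < n ∧ ∃ a : ℕ → R,
    (∀ i ∈ Finset.Icc 1 n, a i ∈ I ^ i) ∧
    x ^ n + ∑ i ∈ Finset.Icc 1 n, a i * x ^ (n - i) = 0

/-- An ideal is integrally closed if every element integral over it belongs to it. -/
def Ideal.IsIntegrallyClosedIdeal {R : Type*} [CommRing R] (I : Ideal R) : Prop :=
  ∀ x : R, I.IsIntegralElement x → x ∈ I

namespace ExProofAux

open MvPolynomial

/-- trailing-degree argument in `S[t]` -/
lemma poly_key {S : Type*} [CommRing S] [IsDomain S] {F : Polynomial S} {n d : ℕ}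
    {A : ℕ → Polynomial S} (hA : ∀ i ∈ Finset.Icc 1 n, Polynomial.X ^ (d * i) ∣ A i)
    (heq : F ^ n + ∑ i ∈ Finset.Icc 1 n, A i * F ^ (n - i) = 0) :
    Polynomial.X ^ d ∣ F := by
  rcases eq_or_ne F 0 with rfl | hF
  · exact dvd_zero _
  by_contra hdvd
  obtain ⟨j, hj, hcj⟩ : ∃ j < d, F.coeff j ≠ 0 := by
    simpa [Polynomial.X_pow_dvd_iff] using hdvd
  set e := F.natTrailingDegree with he_def
  have he : e < d := lt_of_le_of_lt (Polynomial.natTrailingDegree_le_of_ne_zero hcj) hj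
  have hpow : ∀ m : ℕ, (F ^ m).natTrailingDegree = m * e := by
    intro m
    induction m with
    | zero => simp
    | succ m ih =>
      rw [pow_succ, Polynomial.natTrailingDegree_mul (pow_ne_zero m hF) hF, ih]
      ring
  have hFn : F ^ n ≠ 0 := pow_ne_zero n hF
  have hcoeffFn : (F ^ n).coeff (n * e) ≠ 0 := by
    have h1 : (F ^ n).trailingCoeff ≠ 0 := by
      rwa [Ne, Polynomial.trailingCoeff_eq_zero]
    rwa [Polynomial.trailingCoeff, hpow n] at h1
  have hterm : ∀ i ∈ Finset.Icc 1 n, (A i * F ^ (n - i)).coeff (n * e) = 0 := by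
    intro i hi
    obtain ⟨hi1, hi2⟩ := Finset.mem_Icc.mp hi
    rcases eq_or_ne (A i) 0 with h0 | h0
    · simp [h0]
    apply Polynomial.coeff_eq_zero_of_lt_natTrailingDegree
    have hdA : d * i ≤ (A i).natTrailingDegree := by
      apply Polynomial.le_natTrailingDegree h0
      intro m hm
      exact (Polynomial.X_pow_dvd_iff.mp (hA i hi)) m hm
    have hntd : (A i * F ^ (n - i)).natTrailingDegree =
        (A i).natTrailingDegree + (n - i) * e := by
      rw [Polynomial.natTrailingDegree_mul h0 (pow_ne_zero _ hF), hpow]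
    rw [hntd]
    have h2 : n * e + i ≤ d * i + (n - i) * e := by
      have h3 : (e + 1) * i ≤ d * i := Nat.mul_le_mul_right i he
      have h4 : i * e + (n - i) * e = n * e := by
        rw [← Nat.add_mul, Nat.add_sub_cancel' hi2]
      calc n * e + i = i * e + (n - i) * e + i := by rw [h4]
        _ = (e + 1) * i + (n - i) * e := by ring
        _ ≤ d * i + (n - i) * e := by omega
    omega
  have := congrArg (fun p => Polynomial.coeff p (n * e)) heq
  simp only [Polynomial.coeff_add, Polynomial.finset_sum_coeff, Polynomial.coeff_zero] at this
  rw [Finset.sum_congr rfl hterm, Finset.sum_const, smul_zero, add_zero] at this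
  exact hcoeffFn this

lemma dvd_of_isIntegralElem {R S : Type*} [CommRing R] [CommRing S] [IsDomain S]
    (φ : R →+* Polynomial S) {I : Ideal R} {d : ℕ}
    (hI : ∀ g ∈ I, Polynomial.X ^ d ∣ φ g) {r : R} (hr : I.IsIntegralElement r) :
    Polynomial.X ^ d ∣ φ r := by
  obtain ⟨n, hn, a, ha, heq⟩ := hr
  have hmap : ∀ i ∈ Finset.Icc 1 n, Polynomial.X ^ (d * i) ∣ φ (a i) := by
    intro i hi
    have h1 : Ideal.map φ I ≤ Ideal.span {Polynomial.X ^ d} := by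
      rw [Ideal.map_le_iff_le_comap]
      intro g hg
      exact Ideal.mem_comap.mpr (Ideal.mem_span_singleton.mpr (hI g hg))
    have h2 : φ (a i) ∈ Ideal.map φ (I ^ i) := Ideal.mem_map_of_mem φ (ha i hi)
    rw [Ideal.map_pow] at h2
    have h3 : Ideal.map φ I ^ i ≤ Ideal.span {Polynomial.X ^ d} ^ i :=
      Ideal.pow_right_mono h1 i
    rw [Ideal.span_singleton_pow, ← pow_mul] at h3
    exact Ideal.mem_span_singleton.mp (h3 h2)
  apply poly_key hmap
  have := congrArg φ heq
  simpa [map_pow, map_sum, map_mul] using this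

variable {k : Type*} [Field k]

def wt (c : Fin 4 → ℕ) (s : Fin 4 →₀ ℕ) : ℕ := ∑ i, c i * s i

/-- the monomial-valuation test homomorphism: `X i ↦ t ^ c i * X i` -/
noncomputable def psi (c : Fin 4 → ℕ) :
    MvPolynomial (Fin 4) k →+* Polynomial (MvPolynomial (Fin 4) k) :=
  MvPolynomial.eval₂Hom (Polynomial.C.comp MvPolynomial.C)
    (fun i => Polynomial.X ^ c i * Polynomial.C (MvPolynomial.X i))

lemma psi_X (c : Fin 4 → ℕ) (i : Fin 4) :
    psi (k := k) c (X i) = Polynomial.X ^ c i * Polynomial.C (X i) := by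
  simp [psi]

lemma psi_monomial (c : Fin 4 → ℕ) (s : Fin 4 →₀ ℕ) (a : k) :
    psi c (monomial s a) = Polynomial.monomial (wt c s) (monomial s a) := by
  rw [psi, eval₂Hom_monomial]
  rw [Finsupp.prod_fintype _ _ (fun i => pow_zero _)]
  simp only [mul_pow, ← Polynomial.C_pow, ← pow_mul]
  rw [Finset.prod_mul_distrib, Finset.prod_pow_eq_pow_sum, ← map_prod]
  have : (monomial s a : MvPolynomial (Fin 4) k) = C a * ∏ i, X i ^ s i := by
    rw [monomial_eq, Finsupp.prod_fintype _ _ (fun i => pow_zero _)]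
  rw [this]
  simp only [RingHom.coe_comp, Function.comp_apply, wt]
  rw [← Polynomial.C_mul_X_pow_eq_monomial, map_mul]
  ring

lemma X_pow_dvd_psi_iff (c : Fin 4 → ℕ) (d : ℕ) (f : MvPolynomial (Fin 4) k) :
    Polynomial.X ^ d ∣ psi c f ↔ ∀ s ∈ f.support, d ≤ wt c s := by
  have hsum : psi c f =
      ∑ s ∈ f.support, Polynomial.monomial (wt c s) (monomial s (coeff s f)) := by
    conv_lhs => rw [f.as_sum]
    rw [map_sum]
    exact Finset.sum_congr rfl fun s _ => psi_monomial c s (coeff s f)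
  constructor
  · intro h s hs
    by_contra hlt
    push_neg at hlt
    have hc := Polynomial.X_pow_dvd_iff.mp h (wt c s) hlt
    rw [hsum, Polynomial.finset_sum_coeff] at hc
    classical
    simp only [Polynomial.coeff_monomial] at hc
    have h2 := congrArg (MvPolynomial.coeff s) hc
    rw [MvPolynomial.coeff_zero, MvPolynomial.coeff_sum] at h2
    rw [Finset.sum_eq_single_of_mem s hs (fun b _ hb => by
      split <;> simp [MvPolynomial.coeff_monomial, hb])] at h2
    simp [MvPolynomial.coeff_monomial] at h2
    exact (MvPolynomial.mem_support_iff.mp hs) h2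
  · intro h
    rw [hsum]
    apply Finset.dvd_sum
    intro s hs
    rw [← Polynomial.C_mul_X_pow_eq_monomial]
    exact Dvd.dvd.mul_left (pow_dvd_pow _ (h s hs)) _

noncomputable def al : MvPolynomial (Fin 4) k →ₐ[k] MvPolynomial (Fin 4) k :=
  aeval ![X 0 + X 1, X 1, X 2 + X 3, X 3]

noncomputable def al' : MvPolynomial (Fin 4) k →ₐ[k] MvPolynomial (Fin 4) k :=
  aeval ![X 0 - X 1, X 1, X 2 - X 3, X 3]

lemma al'_al (f : MvPolynomial (Fin 4) k) : al' (al f) = f := by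
  have : (al' (k := k)).comp al = AlgHom.id k _ := by
    apply MvPolynomial.algHom_ext
    intro i
    fin_cases i <;> simp [al, al']
  calc al' (al f) = ((al' (k := k)).comp al) f := rfl
    _ = f := by rw [this]; rfl

lemma hX (i : Fin 4) : (X i : MvPolynomial (Fin 4) k) = monomial (Finsupp.single i 1) 1 := by
  rw [← pow_one (X i), X_pow_eq_monomial]

lemma mem_span_step {R : Type*} [CommRing R] {g a : R} {S : Set R} (q : R)
    (h : g - q * a ∈ Ideal.span S) : g ∈ Ideal.span (insert a S) :=
  Ideal.mem_span_insert.mpr ⟨q, g - q * a, h, by ring⟩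

lemma mem_span_last {R : Type*} [CommRing R] {g a : R} (q : R) (h : g = q * a) :
    g ∈ Ideal.span {a} :=
  Ideal.mem_span_singleton.mpr ⟨q, by rw [h, mul_comm]⟩

lemma monomial_mem_span {S : Set (MvPolynomial (Fin 4) k)} (t : Fin 4 →₀ ℕ) {s : Fin 4 →₀ ℕ}
    (a : k) (hmem : monomial t 1 ∈ S) (h : ∀ i, t i ≤ s i) : monomial s a ∈ Ideal.span S := by
  have hts : t + (s - t) = s := by
    ext i
    have := h i
    simp only [Finsupp.add_apply, Finsupp.tsub_apply]
    omega
  have heq : monomial s a = monomial t 1 * monomial (s - t) a := by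
    rw [monomial_mul, one_mul, hts]
  rw [heq]
  exact Ideal.mul_mem_right _ _ (Ideal.subset_span hmem)

lemma wt1 {s : Fin 4 →₀ ℕ} (h : 1 ≤ wt ![1, 0, 1, 0] s) : 1 ≤ s 0 + s 2 := by
  simpa [wt, Fin.sum_univ_four] using h

lemma wt2 {s : Fin 4 →₀ ℕ} (h : 2 ≤ wt ![2, 0, 1, 1] s) : 2 ≤ 2 * s 0 + s 2 + s 3 := by
  simpa [wt, Fin.sum_univ_four, two_mul] using h

lemma wt3 {s : Fin 4 →₀ ℕ} (h : 2 ≤ wt ![1, 1, 2, 0] s) : 2 ≤ s 0 + s 1 + 2 * s 2 := by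
  simpa [wt, Fin.sum_univ_four, two_mul] using h

lemma monomial_step (g : MvPolynomial (Fin 4) k)
    (h1 : ∀ s ∈ g.support, 1 ≤ wt ![1, 0, 1, 0] s)
    (h2 : ∀ s ∈ g.support, 2 ≤ wt ![2, 0, 1, 1] s)
    (h3 : ∀ s ∈ g.support, 2 ≤ wt ![1, 1, 2, 0] s) :
    g ∈ Ideal.span {X 0 ^ 2, X 0 * X 1, X 2 ^ 2, X 2 * X 3, X 0 * X 2} := by
  nth_rewrite 1 [g.as_sum]
  apply Ideal.sum_mem
  intro s hs
  have H1 := wt1 (h1 s hs)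
  have H2 := wt2 (h2 s hs)
  have H3 := wt3 (h3 s hs)
  obtain hD1 | ⟨hD1, hD2⟩ | hD1 | ⟨hD1, hD2⟩ | ⟨hD1, hD2⟩ :
      (2 ≤ s 0) ∨ (1 ≤ s 0 ∧ 1 ≤ s 1) ∨ (2 ≤ s 2) ∨ (1 ≤ s 2 ∧ 1 ≤ s 3) ∨
      (1 ≤ s 0 ∧ 1 ≤ s 2) := by omega
  · exact monomial_mem_span (Finsupp.single 0 2) _
      (by rw [← X_pow_eq_monomial]; simp)
      (fun i => by fin_cases i <;> simp [Finsupp.single_apply] <;> omega)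
  · exact monomial_mem_span (Finsupp.single 0 1 + Finsupp.single 1 1) _
      (by rw [show monomial (Finsupp.single (0 : Fin 4) 1 + Finsupp.single 1 1) (1 : k) =
          X 0 * X 1 from by rw [hX 0, hX 1, monomial_mul, one_mul]]; simp)
      (fun i => by fin_cases i <;> simp [Finsupp.single_apply] <;> omega)
  · exact monomial_mem_span (Finsupp.single 2 2) _
      (by rw [← X_pow_eq_monomial]; simp)
      (fun i => by fin_cases i <;> simp [Finsupp.single_apply] <;> omega)
  · exact monomial_mem_span (Finsupp.single 2 1 + Finsupp.single 3 1) _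
      (by rw [show monomial (Finsupp.single (2 : Fin 4) 1 + Finsupp.single 3 1) (1 : k) =
          X 2 * X 3 from by rw [hX 2, hX 3, monomial_mul, one_mul]]; simp)
      (fun i => by fin_cases i <;> simp [Finsupp.single_apply] <;> omega)
  · exact monomial_mem_span (Finsupp.single 0 1 + Finsupp.single 2 1) _
      (by rw [show monomial (Finsupp.single (0 : Fin 4) 1 + Finsupp.single 2 1) (1 : k) =
          X 0 * X 2 from by rw [hX 0, hX 2, monomial_mul, one_mul]]; simp)
      (fun i => by fin_cases i <;> simp [Finsupp.single_apply] <;> omega)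

lemma span_image_le {R S : Type*} [CommRing R] [CommRing S] (φ : R →+* S) (SS : Set R)
    (J : Ideal S) (h : ∀ g ∈ SS, φ g ∈ J) : ∀ f ∈ Ideal.span SS, φ f ∈ J := fun f hf =>
  Ideal.mem_comap.mp
    (Ideal.span_le.mpr (fun a ha => Ideal.mem_comap.mpr (h a ha)) hf)

lemma dvd_all_span {R S : Type*} [CommRing R] [CommRing S] (φ : R →+* S) (SS : Set R)
    (u : S) (h : ∀ g ∈ SS, u ∣ φ g) : ∀ f ∈ Ideal.span SS, u ∣ φ f := fun f hf =>
  Ideal.mem_span_singleton.mp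
    (span_image_le φ SS (Ideal.span {u}) (fun g hg => Ideal.mem_span_singleton.mpr (h g hg)) f hf)

end ExProofAux

open MvPolynomial ExProofAux in
set_option maxHeartbeats 2000000 in
/-- **Example 4.7.** -/
theorem integral_closure_of_binomial_ideal_not_binomial
    {k : Type*} [Field k] [CharZero k]
    (x y z w : MvPolynomial (Fin 4) k)
    (hx : x = MvPolynomial.X 0) (hy : y = MvPolynomial.X 1)
    (hz : z = MvPolynomial.X 2) (hw : w = MvPolynomial.X 3)
    (I : Ideal (MvPolynomial (Fin 4) k))
    (hI : I = Ideal.span {x ^ 2 - x * y, -(x * y) + y ^ 2, z ^ 2 - z * w, -(z * w) + w ^ 2}) :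
    {r | I.IsIntegralElement r} =
      (Ideal.span {x ^ 2 - x * y, -(x * y) + y ^ 2, z ^ 2 - z * w, -(z * w) + w ^ 2,
          x * z - y * z - x * w + y * w} : Set (MvPolynomial (Fin 4) k)) ∧
      Ideal.span {x ^ 2 - x * y, -(x * y) + y ^ 2, z ^ 2 - z * w, -(z * w) + w ^ 2,
          x * z - y * z - x * w + y * w} =
        Ideal.span {x - y, z - w} ⊓
          Ideal.span {x - y, z ^ 2, z * w, w ^ 2} ⊓
          Ideal.span {z - w, x ^ 2, x * y, y ^ 2} := by
  subst hx hy hz hw hI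
  classical
  -- base divisibility facts for the three monomial valuations (after the change of variables `al`)
  have b1u : Polynomial.X ∣ psi ![1,0,1,0] (al (X 0 - X 1 : MvPolynomial (Fin 4) k)) := by
    rw [show psi ![1,0,1,0] (al (X 0 - X 1 : MvPolynomial (Fin 4) k)) =
      Polynomial.X * Polynomial.C (X 0) from by simp [al, psi_X]]
    exact dvd_mul_right _ _
  have b1v : Polynomial.X ∣ psi ![1,0,1,0] (al (X 2 - X 3 : MvPolynomial (Fin 4) k)) := by
    rw [show psi ![1,0,1,0] (al (X 2 - X 3 : MvPolynomial (Fin 4) k)) =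
      Polynomial.X * Polynomial.C (X 2) from by simp [al, psi_X]]
    exact dvd_mul_right _ _
  have b2u : Polynomial.X ^ 2 ∣ psi ![2,0,1,1] (al (X 0 - X 1 : MvPolynomial (Fin 4) k)) := by
    rw [show psi ![2,0,1,1] (al (X 0 - X 1 : MvPolynomial (Fin 4) k)) =
      Polynomial.X ^ 2 * Polynomial.C (X 0) from by simp [al, psi_X]]
    exact dvd_mul_right _ _
  have b2v : Polynomial.X ∣ psi ![2,0,1,1] (al (X 2 - X 3 : MvPolynomial (Fin 4) k)) := by
    rw [show psi ![2,0,1,1] (al (X 2 - X 3 : MvPolynomial (Fin 4) k)) =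
      Polynomial.X * Polynomial.C (X 2) from by simp [al, psi_X]]
    exact dvd_mul_right _ _
  have b2z : Polynomial.X ∣ psi ![2,0,1,1] (al (X 2 : MvPolynomial (Fin 4) k)) := by
    rw [show psi ![2,0,1,1] (al (X 2 : MvPolynomial (Fin 4) k)) =
      Polynomial.X * (Polynomial.C (X 2) + Polynomial.C (X 3)) from by simp [al, psi_X]; ring]
    exact dvd_mul_right _ _
  have b2w : Polynomial.X ∣ psi ![2,0,1,1] (al (X 3 : MvPolynomial (Fin 4) k)) := by
    rw [show psi ![2,0,1,1] (al (X 3 : MvPolynomial (Fin 4) k)) =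
      Polynomial.X * Polynomial.C (X 3) from by simp [al, psi_X]]
    exact dvd_mul_right _ _
  have b3v : Polynomial.X ^ 2 ∣ psi ![1,1,2,0] (al (X 2 - X 3 : MvPolynomial (Fin 4) k)) := by
    rw [show psi ![1,1,2,0] (al (X 2 - X 3 : MvPolynomial (Fin 4) k)) =
      Polynomial.X ^ 2 * Polynomial.C (X 2) from by simp [al, psi_X]]
    exact dvd_mul_right _ _
  have b3u : Polynomial.X ∣ psi ![1,1,2,0] (al (X 0 - X 1 : MvPolynomial (Fin 4) k)) := by
    rw [show psi ![1,1,2,0] (al (X 0 - X 1 : MvPolynomial (Fin 4) k)) =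
      Polynomial.X * Polynomial.C (X 0) from by simp [al, psi_X]]
    exact dvd_mul_right _ _
  have b3x : Polynomial.X ∣ psi ![1,1,2,0] (al (X 0 : MvPolynomial (Fin 4) k)) := by
    rw [show psi ![1,1,2,0] (al (X 0 : MvPolynomial (Fin 4) k)) =
      Polynomial.X * (Polynomial.C (X 0) + Polynomial.C (X 1)) from by simp [al, psi_X]; ring]
    exact dvd_mul_right _ _
  have b3y : Polynomial.X ∣ psi ![1,1,2,0] (al (X 1 : MvPolynomial (Fin 4) k)) := by
    rw [show psi ![1,1,2,0] (al (X 1 : MvPolynomial (Fin 4) k)) =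
      Polynomial.X * Polynomial.C (X 1) from by simp [al, psi_X]]
    exact dvd_mul_right _ _
  have b1u' : Polynomial.X ∣ psi ![1,0,1,0] (al (X 1 - X 0 : MvPolynomial (Fin 4) k)) := by
    rw [show psi ![1,0,1,0] (al (X 1 - X 0 : MvPolynomial (Fin 4) k)) =
      Polynomial.X * (-Polynomial.C (X 0 : MvPolynomial (Fin 4) k)) from by simp [al, psi_X]; ring]
    exact dvd_mul_right _ _
  have b1v' : Polynomial.X ∣ psi ![1,0,1,0] (al (X 3 - X 2 : MvPolynomial (Fin 4) k)) := by
    rw [show psi ![1,0,1,0] (al (X 3 - X 2 : MvPolynomial (Fin 4) k)) =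
      Polynomial.X * (-Polynomial.C (X 2 : MvPolynomial (Fin 4) k)) from by simp [al, psi_X]; ring]
    exact dvd_mul_right _ _
  have b2u' : Polynomial.X ^ 2 ∣ psi ![2,0,1,1] (al (X 1 - X 0 : MvPolynomial (Fin 4) k)) := by
    rw [show psi ![2,0,1,1] (al (X 1 - X 0 : MvPolynomial (Fin 4) k)) =
      Polynomial.X ^ 2 * (-Polynomial.C (X 0 : MvPolynomial (Fin 4) k)) from by simp [al, psi_X]; ring]
    exact dvd_mul_right _ _
  have b2v' : Polynomial.X ∣ psi ![2,0,1,1] (al (X 3 - X 2 : MvPolynomial (Fin 4) k)) := by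
    rw [show psi ![2,0,1,1] (al (X 3 - X 2 : MvPolynomial (Fin 4) k)) =
      Polynomial.X * (-Polynomial.C (X 2 : MvPolynomial (Fin 4) k)) from by simp [al, psi_X]; ring]
    exact dvd_mul_right _ _
  have b3u' : Polynomial.X ∣ psi ![1,1,2,0] (al (X 1 - X 0 : MvPolynomial (Fin 4) k)) := by
    rw [show psi ![1,1,2,0] (al (X 1 - X 0 : MvPolynomial (Fin 4) k)) =
      Polynomial.X * (-Polynomial.C (X 0 : MvPolynomial (Fin 4) k)) from by simp [al, psi_X]; ring]
    exact dvd_mul_right _ _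
  have b3v' : Polynomial.X ^ 2 ∣ psi ![1,1,2,0] (al (X 3 - X 2 : MvPolynomial (Fin 4) k)) := by
    rw [show psi ![1,1,2,0] (al (X 3 - X 2 : MvPolynomial (Fin 4) k)) =
      Polynomial.X ^ 2 * (-Polynomial.C (X 2 : MvPolynomial (Fin 4) k)) from by simp [al, psi_X]; ring]
    exact dvd_mul_right _ _
  -- the key step: the three valuation conditions imply membership in the candidate ideal J
  have key : ∀ f : MvPolynomial (Fin 4) k,
      Polynomial.X ^ 1 ∣ psi ![1,0,1,0] (al f) →
      Polynomial.X ^ 2 ∣ psi ![2,0,1,1] (al f) →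
      Polynomial.X ^ 2 ∣ psi ![1,1,2,0] (al f) →
      f ∈ Ideal.span {X 0 ^ 2 - X 0 * X 1, -(X 0 * X 1) + X 1 ^ 2, X 2 ^ 2 - X 2 * X 3,
        -(X 2 * X 3) + X 3 ^ 2, X 0 * X 2 - X 1 * X 2 - X 0 * X 3 + X 1 * X 3} := by
    intro f h1 h2 h3
    have m := monomial_step (al f) ((X_pow_dvd_psi_iff _ _ _).mp h1)
      ((X_pow_dvd_psi_iff _ _ _).mp h2) ((X_pow_dvd_psi_iff _ _ _).mp h3)
    have hcerts : ∀ g ∈ ({X 0 ^ 2, X 0 * X 1, X 2 ^ 2, X 2 * X 3, X 0 * X 2} :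
        Set (MvPolynomial (Fin 4) k)),
        al'.toRingHom g ∈ Ideal.span {X 0 ^ 2 - X 0 * X 1, -(X 0 * X 1) + X 1 ^ 2,
          X 2 ^ 2 - X 2 * X 3, -(X 2 * X 3) + X 3 ^ 2,
          X 0 * X 2 - X 1 * X 2 - X 0 * X 3 + X 1 * X 3} := by
      intro g hg
      simp only [Set.mem_insert_iff, Set.mem_singleton_iff] at hg
      rcases hg with rfl | rfl | rfl | rfl | rfl
      · rw [show al'.toRingHom ((X 0 : MvPolynomial (Fin 4) k) ^ 2) = (X 0 - X 1) ^ 2 from by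
          simp [al']]
        exact mem_span_step 1 (mem_span_step 1 (mem_span_step 0 (mem_span_step 0
          (mem_span_last 0 (by ring)))))
      · rw [show al'.toRingHom ((X 0 : MvPolynomial (Fin 4) k) * X 1) = (X 0 - X 1) * X 1 from by
          simp [al']]
        exact mem_span_step 0 (mem_span_step (-1) (mem_span_step 0 (mem_span_step 0
          (mem_span_last 0 (by ring)))))
      · rw [show al'.toRingHom ((X 2 : MvPolynomial (Fin 4) k) ^ 2) = (X 2 - X 3) ^ 2 from by
          simp [al']]
        exact mem_span_step 0 (mem_span_step 0 (mem_span_step 1 (mem_span_step 1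
          (mem_span_last 0 (by ring)))))
      · rw [show al'.toRingHom ((X 2 : MvPolynomial (Fin 4) k) * X 3) = (X 2 - X 3) * X 3 from by
          simp [al']]
        exact mem_span_step 0 (mem_span_step 0 (mem_span_step 0 (mem_span_step (-1)
          (mem_span_last 0 (by ring)))))
      · rw [show al'.toRingHom ((X 0 : MvPolynomial (Fin 4) k) * X 2) = (X 0 - X 1) * (X 2 - X 3)
          from by simp [al']]
        exact mem_span_step 0 (mem_span_step 0 (mem_span_step 0 (mem_span_step 0
          (mem_span_last 1 (by ring)))))
    have h := span_image_le al'.toRingHom _ _ hcerts (al f) m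
    rwa [show al'.toRingHom (al f) = f from al'_al f] at h
  -- divisibility of the whole ideals
  have packI1 : ∀ f ∈ Ideal.span ({X 0 ^ 2 - X 0 * X 1, -(X 0 * X 1) + X 1 ^ 2,
      X 2 ^ 2 - X 2 * X 3, -(X 2 * X 3) + X 3 ^ 2} : Set (MvPolynomial (Fin 4) k)),
      Polynomial.X ^ 1 ∣ ((psi ![1,0,1,0]).comp al.toRingHom) f := by
    apply dvd_all_span
    intro g hg
    simp only [Set.mem_insert_iff, Set.mem_singleton_iff] at hg
    simp only [RingHom.coe_comp, Function.comp_apply, AlgHom.coe_toRingHom, pow_one]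
    rcases hg with rfl | rfl | rfl | rfl
    · rw [show (X 0 ^ 2 - X 0 * X 1 : MvPolynomial (Fin 4) k) = X 0 * (X 0 - X 1) from by ring,
        map_mul, map_mul]
      exact Dvd.dvd.mul_left b1u _
    · rw [show (-(X 0 * X 1) + X 1 ^ 2 : MvPolynomial (Fin 4) k) = X 1 * (X 1 - X 0) from by
        ring, map_mul, map_mul]
      exact Dvd.dvd.mul_left b1u' _
    · rw [show (X 2 ^ 2 - X 2 * X 3 : MvPolynomial (Fin 4) k) = X 2 * (X 2 - X 3) from by ring,
        map_mul, map_mul]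
      exact Dvd.dvd.mul_left b1v _
    · rw [show (-(X 2 * X 3) + X 3 ^ 2 : MvPolynomial (Fin 4) k) = X 3 * (X 3 - X 2) from by
        ring, map_mul, map_mul]
      exact Dvd.dvd.mul_left b1v' _
  have packI2 : ∀ f ∈ Ideal.span ({X 0 ^ 2 - X 0 * X 1, -(X 0 * X 1) + X 1 ^ 2,
      X 2 ^ 2 - X 2 * X 3, -(X 2 * X 3) + X 3 ^ 2} : Set (MvPolynomial (Fin 4) k)),
      Polynomial.X ^ 2 ∣ ((psi ![2,0,1,1]).comp al.toRingHom) f := by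
    apply dvd_all_span
    intro g hg
    simp only [Set.mem_insert_iff, Set.mem_singleton_iff] at hg
    simp only [RingHom.coe_comp, Function.comp_apply, AlgHom.coe_toRingHom]
    rcases hg with rfl | rfl | rfl | rfl
    · rw [show (X 0 ^ 2 - X 0 * X 1 : MvPolynomial (Fin 4) k) = X 0 * (X 0 - X 1) from by ring,
        map_mul, map_mul]
      exact Dvd.dvd.mul_left b2u _
    · rw [show (-(X 0 * X 1) + X 1 ^ 2 : MvPolynomial (Fin 4) k) = X 1 * (X 1 - X 0) from by
        ring, map_mul, map_mul]
      exact Dvd.dvd.mul_left b2u' _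
    · rw [show (X 2 ^ 2 - X 2 * X 3 : MvPolynomial (Fin 4) k) = X 2 * (X 2 - X 3) from by ring,
        map_mul, map_mul, pow_two]
      exact mul_dvd_mul b2z b2v
    · rw [show (-(X 2 * X 3) + X 3 ^ 2 : MvPolynomial (Fin 4) k) = X 3 * (X 3 - X 2) from by
        ring, map_mul, map_mul, pow_two]
      exact mul_dvd_mul b2w b2v'
  have packI3 : ∀ f ∈ Ideal.span ({X 0 ^ 2 - X 0 * X 1, -(X 0 * X 1) + X 1 ^ 2,
      X 2 ^ 2 - X 2 * X 3, -(X 2 * X 3) + X 3 ^ 2} : Set (MvPolynomial (Fin 4) k)),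
      Polynomial.X ^ 2 ∣ ((psi ![1,1,2,0]).comp al.toRingHom) f := by
    apply dvd_all_span
    intro g hg
    simp only [Set.mem_insert_iff, Set.mem_singleton_iff] at hg
    simp only [RingHom.coe_comp, Function.comp_apply, AlgHom.coe_toRingHom]
    rcases hg with rfl | rfl | rfl | rfl
    · rw [show (X 0 ^ 2 - X 0 * X 1 : MvPolynomial (Fin 4) k) = X 0 * (X 0 - X 1) from by ring,
        map_mul, map_mul, pow_two]
      exact mul_dvd_mul b3x b3u
    · rw [show (-(X 0 * X 1) + X 1 ^ 2 : MvPolynomial (Fin 4) k) = X 1 * (X 1 - X 0) from by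
        ring, map_mul, map_mul, pow_two]
      exact mul_dvd_mul b3y b3u'
    · rw [show (X 2 ^ 2 - X 2 * X 3 : MvPolynomial (Fin 4) k) = X 2 * (X 2 - X 3) from by ring,
        map_mul, map_mul]
      exact Dvd.dvd.mul_left b3v _
    · rw [show (-(X 2 * X 3) + X 3 ^ 2 : MvPolynomial (Fin 4) k) = X 3 * (X 3 - X 2) from by
        ring, map_mul, map_mul]
      exact Dvd.dvd.mul_left b3v' _
  have packK1 : ∀ f ∈ Ideal.span ({X 0 - X 1, X 2 - X 3} : Set (MvPolynomial (Fin 4) k)),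
      Polynomial.X ^ 1 ∣ ((psi ![1,0,1,0]).comp al.toRingHom) f := by
    apply dvd_all_span
    intro g hg
    simp only [Set.mem_insert_iff, Set.mem_singleton_iff] at hg
    simp only [RingHom.coe_comp, Function.comp_apply, AlgHom.coe_toRingHom, pow_one]
    rcases hg with rfl | rfl
    · exact b1u
    · exact b1v
  have packK2 : ∀ f ∈ Ideal.span ({X 0 - X 1, X 2 ^ 2, X 2 * X 3, X 3 ^ 2} :
      Set (MvPolynomial (Fin 4) k)),
      Polynomial.X ^ 2 ∣ ((psi ![2,0,1,1]).comp al.toRingHom) f := by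
    apply dvd_all_span
    intro g hg
    simp only [Set.mem_insert_iff, Set.mem_singleton_iff] at hg
    simp only [RingHom.coe_comp, Function.comp_apply, AlgHom.coe_toRingHom]
    rcases hg with rfl | rfl | rfl | rfl
    · exact b2u
    · rw [show ((X 2 : MvPolynomial (Fin 4) k) ^ 2) = X 2 * X 2 from by ring, map_mul, map_mul,
        pow_two]
      exact mul_dvd_mul b2z b2z
    · rw [map_mul, map_mul, pow_two]
      exact mul_dvd_mul b2z b2w
    · rw [show ((X 3 : MvPolynomial (Fin 4) k) ^ 2) = X 3 * X 3 from by ring, map_mul, map_mul,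
        pow_two]
      exact mul_dvd_mul b2w b2w
  have packK3 : ∀ f ∈ Ideal.span ({X 2 - X 3, X 0 ^ 2, X 0 * X 1, X 1 ^ 2} :
      Set (MvPolynomial (Fin 4) k)),
      Polynomial.X ^ 2 ∣ ((psi ![1,1,2,0]).comp al.toRingHom) f := by
    apply dvd_all_span
    intro g hg
    simp only [Set.mem_insert_iff, Set.mem_singleton_iff] at hg
    simp only [RingHom.coe_comp, Function.comp_apply, AlgHom.coe_toRingHom]
    rcases hg with rfl | rfl | rfl | rfl
    · exact b3v
    · rw [show ((X 0 : MvPolynomial (Fin 4) k) ^ 2) = X 0 * X 0 from by ring, map_mul, map_mul,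
        pow_two]
      exact mul_dvd_mul b3x b3x
    · rw [map_mul, map_mul, pow_two]
      exact mul_dvd_mul b3x b3y
    · rw [show ((X 1 : MvPolynomial (Fin 4) k) ^ 2) = X 1 * X 1 from by ring, map_mul, map_mul,
        pow_two]
      exact mul_dvd_mul b3y b3y
  constructor
  · -- the set of integral elements is J
    ext r
    simp only [Set.mem_setOf_eq, SetLike.mem_coe]
    constructor
    · intro hr
      apply key r
      · have h := dvd_of_isIntegralElem _ packI1 hr
        exact h
      · have h := dvd_of_isIntegralElem _ packI2 hr
        exact h
      · have h := dvd_of_isIntegralElem _ packI3 hr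
        exact h
    · intro hr
      rw [show ({X 0 ^ 2 - X 0 * X 1, -(X 0 * X 1) + X 1 ^ 2, X 2 ^ 2 - X 2 * X 3,
          -(X 2 * X 3) + X 3 ^ 2, X 0 * X 2 - X 1 * X 2 - X 0 * X 3 + X 1 * X 3} :
          Set (MvPolynomial (Fin 4) k)) =
        insert (X 0 * X 2 - X 1 * X 2 - X 0 * X 3 + X 1 * X 3)
          {X 0 ^ 2 - X 0 * X 1, -(X 0 * X 1) + X 1 ^ 2, X 2 ^ 2 - X 2 * X 3,
            -(X 2 * X 3) + X 3 ^ 2} from by ext p; simp; tauto] at hr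
      rw [Ideal.mem_span_insert] at hr
      obtain ⟨q, p, hp, hrepr⟩ := hr
      refine ⟨2, by norm_num, fun i => if i = 1 then -(2 * p) else
        p ^ 2 - q ^ 2 * (X 0 * X 2 - X 1 * X 2 - X 0 * X 3 + X 1 * X 3) ^ 2, ?_, ?_⟩
      · intro i hi
        have hi' : i = 1 ∨ i = 2 := by
          simp only [Finset.mem_Icc] at hi
          omega
        rcases hi' with rfl | rfl
        · rw [pow_one]
          exact (neg_mem (Ideal.mul_mem_left _ _ hp) :
            -(2 * p) ∈ Ideal.span {X 0 ^ 2 - X 0 * X 1, -(X 0 * X 1) + X 1 ^ 2,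
              X 2 ^ 2 - X 2 * X 3, -(X 2 * X 3) + X 3 ^ 2})
        · have hmem2 : p ^ 2 - q ^ 2 * (X 0 * X 2 - X 1 * X 2 - X 0 * X 3 + X 1 * X 3) ^ 2 ∈
              Ideal.span ({X 0 ^ 2 - X 0 * X 1, -(X 0 * X 1) + X 1 ^ 2,
                X 2 ^ 2 - X 2 * X 3, -(X 2 * X 3) + X 3 ^ 2} :
                Set (MvPolynomial (Fin 4) k)) ^ 2 := by
            have hII : Ideal.span ({X 0 ^ 2 - X 0 * X 1, -(X 0 * X 1) + X 1 ^ 2,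
                X 2 ^ 2 - X 2 * X 3, -(X 2 * X 3) + X 3 ^ 2} : Set (MvPolynomial (Fin 4) k)) *
                Ideal.span ({X 0 ^ 2 - X 0 * X 1, -(X 0 * X 1) + X 1 ^ 2,
                X 2 ^ 2 - X 2 * X 3, -(X 2 * X 3) + X 3 ^ 2} : Set (MvPolynomial (Fin 4) k)) ≤
                Ideal.span ({X 0 ^ 2 - X 0 * X 1, -(X 0 * X 1) + X 1 ^ 2,
                X 2 ^ 2 - X 2 * X 3, -(X 2 * X 3) + X 3 ^ 2} : Set (MvPolynomial (Fin 4) k)) ^ 2 :=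
              le_of_eq (pow_two _).symm
            refine sub_mem ?_ ?_
            · exact Ideal.pow_mem_pow hp 2
            · rw [show (q ^ 2 * (X 0 * X 2 - X 1 * X 2 - X 0 * X 3 + X 1 * X 3) ^ 2 :
                  MvPolynomial (Fin 4) k) =
                (q ^ 2 * ((X 0 ^ 2 - X 0 * X 1) + (-(X 0 * X 1) + X 1 ^ 2))) *
                  ((X 2 ^ 2 - X 2 * X 3) + (-(X 2 * X 3) + X 3 ^ 2)) from by ring]
              refine hII (Ideal.mul_mem_mul (Ideal.mul_mem_left _ _ ?_) ?_)
              · exact add_mem (Ideal.subset_span (by simp)) (Ideal.subset_span (by simp))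
              · exact add_mem (Ideal.subset_span (by simp)) (Ideal.subset_span (by simp))
          exact hmem2
      · rw [show Finset.Icc 1 2 = ({1, 2} : Finset ℕ) from by decide,
          Finset.sum_insert (by decide), Finset.sum_singleton]
        norm_num
        rw [hrepr]
        ring
  · -- J is the intersection of the three primary components
    apply le_antisymm
    · rw [Ideal.span_le]
      intro a ha
      simp only [Set.mem_insert_iff, Set.mem_singleton_iff] at ha
      rw [SetLike.mem_coe, Ideal.mem_inf, Ideal.mem_inf]
      rcases ha with rfl | rfl | rfl | rfl | rfl
      · exact ⟨⟨mem_span_step (X 0) (mem_span_last 0 (by ring)),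
          mem_span_step (X 0) (mem_span_step 0 (mem_span_step 0 (mem_span_last 0 (by ring))))⟩,
          mem_span_step 0 (mem_span_step 1 (mem_span_step (-1) (mem_span_last 0 (by ring))))⟩
      · exact ⟨⟨mem_span_step (-(X 1)) (mem_span_last 0 (by ring)),
          mem_span_step (-(X 1)) (mem_span_step 0 (mem_span_step 0 (mem_span_last 0 (by ring))))⟩,
          mem_span_step 0 (mem_span_step 0 (mem_span_step (-1) (mem_span_last 1 (by ring))))⟩
      · exact ⟨⟨mem_span_step 0 (mem_span_last (X 2) (by ring)),
          mem_span_step 0 (mem_span_step 1 (mem_span_step (-1) (mem_span_last 0 (by ring))))⟩,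
          mem_span_step (X 2) (mem_span_step 0 (mem_span_step 0 (mem_span_last 0 (by ring))))⟩
      · exact ⟨⟨mem_span_step 0 (mem_span_last (-(X 3)) (by ring)),
          mem_span_step 0 (mem_span_step 0 (mem_span_step (-1) (mem_span_last 1 (by ring))))⟩,
          mem_span_step (-(X 3)) (mem_span_step 0 (mem_span_step 0 (mem_span_last 0 (by ring))))⟩
      · exact ⟨⟨mem_span_step (X 2 - X 3) (mem_span_last 0 (by ring)),
          mem_span_step (X 2 - X 3) (mem_span_step 0 (mem_span_step 0
            (mem_span_last 0 (by ring))))⟩,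
          mem_span_step (X 0 - X 1) (mem_span_step 0 (mem_span_step 0
            (mem_span_last 0 (by ring))))⟩
    · intro f hf
      rw [Ideal.mem_inf, Ideal.mem_inf] at hf
      obtain ⟨⟨hf1, hf2⟩, hf3⟩ := hf
      apply key f
      · have h := packK1 f hf1
        exact h
      · have h := packK2 f hf2
        exact h
      · have h := packK3 f hf3
        exact h
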